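/- For Hermitian H and a density matrix ρ on a finite-dimensional Hilbert space, ‖[H, ρ]‖₁ ≤ 2·√(tr(ρ H²) − (tr(ρ H))²), i.e., the trace norm of the commutator is bounded by twice the square root of the variance of H in the state ρ. -/

import Mathlib

open scoped BigOperators ComplexOrder Matrix

/-- Schatten 1-norm (trace norm) of a complex matrix: `tr √(AᴴA)`. -/
noncomputable def traceNorm {n : Type*} [Fintype n] [DecidableEq n] (A : Matrix n n ℂ) : ℝ :=
  (((Matrix.posSemidef_conjTranspose_mul_self A).1.eigenvectorUnitary.1 *
      Matrix.diagonal (((↑) : ℝ → ℂ) ∘ Real.sqrt ∘ (Matrix.posSemidef_conjTranspose_mul_self A).1.eigenvalues) *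
      (star (Matrix.posSemidef_conjTranspose_mul_self A).1.eigenvectorUnitary : Matrix n n ℂ)).trace).re

/-- For Hermitian `H` and a density matrix `ρ`,
`‖[H, ρ]‖₁ ≤ 2 √(tr(ρH²) - (tr(ρH))²)`. -/
theorem traceNorm_commutator_le_variance {n : Type*} [Fintype n] [DecidableEq n]
    (H ρ : Matrix n n ℂ) (hH : H.IsHermitian) (hρ : ρ.PosSemidef) (htr : ρ.trace = 1) :
    traceNorm (H * ρ - ρ * H)
      ≤ 2 * Real.sqrt (((ρ * (H * H)).trace).re - (((ρ * H).trace).re) ^ 2) := by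
  classical
  set t : ℂ := (ρ * H).trace with ht_def
  have hstar : (starRingEnd ℂ) t = t := by
    rw [ht_def, ← Complex.star_def, ← Matrix.trace_conjTranspose, Matrix.conjTranspose_mul,
      hH.eq, hρ.1.eq, Matrix.trace_mul_comm]
  set c : ℝ := t.re with hc_def
  have ht : t = (c : ℂ) := (Complex.conj_eq_iff_re.mp hstar).symm
  set H' : Matrix n n ℂ := H - (c : ℂ) • 1 with hH'_def
  have hH' : H'.IsHermitian := by
    refine hH.sub ?_
    simp [Matrix.IsHermitian, Matrix.conjTranspose_smul, Complex.star_def, Complex.conj_ofReal]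
  open scoped MatrixOrder in
  set S : Matrix n n ℂ := CFC.sqrt ρ with hS_def
  open scoped MatrixOrder in
  have hS : S.PosSemidef := Matrix.nonneg_iff_posSemidef.mp (CFC.sqrt_nonneg ρ)
  have hSh : Sᴴ = S := hS.1
  open scoped MatrixOrder in
  have hSS : S * S = ρ := CFC.sqrt_mul_sqrt_self ρ hρ.nonneg
  set X : Matrix n n ℂ := H' * S with hX_def
  have hXc : Xᴴ = S * H' := by rw [hX_def, Matrix.conjTranspose_mul, hSh, hH'.eq]
  set C : Matrix n n ℂ := H * ρ - ρ * H with hC_def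
  have hCX : C = X * S - S * Xᴴ := by
    rw [hXc, hX_def, Matrix.mul_assoc, ← Matrix.mul_assoc S S, hSS, hC_def, hH'_def]
    simp [Matrix.sub_mul, Matrix.mul_sub, Matrix.smul_mul, Matrix.mul_smul]
  have hCt : Cᴴ = -C := by
    rw [hC_def]
    simp [Matrix.conjTranspose_sub, Matrix.conjTranspose_mul, hH.eq, hρ.1.eq]
  have hM : (Complex.I • C).IsHermitian := by
    show (Complex.I • C)ᴴ = _
    rw [Matrix.conjTranspose_smul, hCt]
    simp [Complex.star_def, Complex.conj_I, neg_smul, smul_neg]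
  set U : Matrix n n ℂ := (hM.eigenvectorUnitary : Matrix n n ℂ) with hU_def
  have hUU : star U * U = 1 := Matrix.mem_unitaryGroup_iff'.mp hM.eigenvectorUnitary.2
  have hUU' : U * star U = 1 := Matrix.mem_unitaryGroup_iff.mp hM.eigenvectorUnitary.2
  set lam : n → ℝ := hM.eigenvalues with hlam_def
  have hspec : star U * (Complex.I • C) * U = Matrix.diagonal (Complex.ofReal ∘ lam) :=
    by have h := hM.conjStarAlgAut_star_eigenvectorUnitary
       rw [Unitary.conjStarAlgAut_star_apply] at h; exact h
  set A : Matrix n n ℂ := Xᴴ * U with hA_def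
  set B : Matrix n n ℂ := S * U with hB_def
  have hAc : Aᴴ = star U * X := by
    rw [hA_def, Matrix.conjTranspose_mul, Matrix.conjTranspose_conjTranspose,
      Matrix.star_eq_conjTranspose]
  have hBc : Bᴴ = star U * S := by
    rw [hB_def, Matrix.conjTranspose_mul, hSh, Matrix.star_eq_conjTranspose]
  have hUCU : star U * C * U = Aᴴ * B - Bᴴ * A := by
    rw [hCX, hAc, hBc, hA_def, hB_def]
    simp only [Matrix.mul_sub, Matrix.sub_mul, Matrix.mul_assoc]
  have hdiag : ∀ j, (lam j : ℂ) =
      Complex.I * ((Aᴴ * B) j j - (starRingEnd ℂ) ((Aᴴ * B) j j)) := by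
    intro j
    have h1 : star U * (Complex.I • C) * U = Complex.I • (star U * C * U) := by
      simp [Matrix.mul_smul, Matrix.smul_mul]
    have h2 := hspec
    rw [h1, hUCU] at h2
    have h3 := congrArg (fun M : Matrix n n ℂ => M j j) h2
    simp only [Matrix.smul_apply, Matrix.sub_apply, Matrix.diagonal_apply_eq,
      Function.comp_apply, smul_eq_mul] at h3
    have h4 : (Bᴴ * A) j j = (starRingEnd ℂ) ((Aᴴ * B) j j) := by
      have : Bᴴ * A = (Aᴴ * B)ᴴ := by
        symm
        rw [Matrix.conjTranspose_mul Aᴴ B, Matrix.conjTranspose_conjTranspose]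
      rw [this, Matrix.conjTranspose_apply, Complex.star_def]
    rw [h4] at h3
    rw [← h3]
  have hlam_eq : ∀ j, lam j = -(2 * ((Aᴴ * B) j j).im) := by
    intro j
    have h := hdiag j
    rw [Complex.sub_conj] at h
    have : ((lam j : ℝ) : ℂ) = ((-(2 * ((Aᴴ * B) j j).im) : ℝ) : ℂ) := by
      rw [h]; push_cast
      rw [mul_comm Complex.I, mul_assoc, Complex.I_mul_I]; ring
    exact_mod_cast this
  set alpha : n → ℝ := fun j => ∑ k, ‖A k j‖ ^ 2 with halpha_def
  set beta : n → ℝ := fun j => ∑ k, ‖B k j‖ ^ 2 with hbeta_def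
  have halpha_nonneg : ∀ j, 0 ≤ alpha j := fun j =>
    Finset.sum_nonneg fun k _ => sq_nonneg _
  have hbeta_nonneg : ∀ j, 0 ≤ beta j := fun j =>
    Finset.sum_nonneg fun k _ => sq_nonneg _
  have habs : ∀ j, |lam j| ≤ 2 * (Real.sqrt (alpha j) * Real.sqrt (beta j)) := by
    intro j
    have h1 : |lam j| ≤ 2 * ‖(Aᴴ * B) j j‖ := by
      rw [hlam_eq j, abs_neg, abs_mul]
      rw [show |(2:ℝ)| = 2 from abs_two]
      have := Complex.abs_im_le_norm ((Aᴴ * B) j j)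
      linarith
    have h2 : ‖(Aᴴ * B) j j‖ ≤ Real.sqrt (alpha j) * Real.sqrt (beta j) := by
      have hz : (Aᴴ * B) j j = ∑ k, (starRingEnd ℂ) (A k j) * B k j := by
        simp [Matrix.mul_apply, Matrix.conjTranspose_apply, Complex.star_def]
      calc ‖(Aᴴ * B) j j‖
          ≤ ∑ k, ‖A k j‖ * ‖B k j‖ := by
            rw [hz]
            refine (norm_sum_le _ _).trans (le_of_eq ?_)
            refine Finset.sum_congr rfl fun k _ => ?_
            rw [norm_mul, Complex.norm_conj]
        _ ≤ Real.sqrt (alpha j) * Real.sqrt (beta j) :=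
            Real.sum_mul_le_sqrt_mul_sqrt _ _ _
    linarith [Real.sqrt_nonneg (alpha j), Real.sqrt_nonneg (beta j)]
  have hsum : ∑ j, |lam j| ≤
      2 * (Real.sqrt (∑ j, alpha j) * Real.sqrt (∑ j, beta j)) := by
    calc ∑ j, |lam j| ≤ ∑ j, 2 * (Real.sqrt (alpha j) * Real.sqrt (beta j)) :=
          Finset.sum_le_sum fun j _ => habs j
      _ = 2 * ∑ j, Real.sqrt (alpha j) * Real.sqrt (beta j) := by
          rw [Finset.mul_sum]
      _ ≤ _ := by
          have := Real.sum_sqrt_mul_sqrt_le Finset.univ halpha_nonneg hbeta_nonneg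
          nlinarith [this]
  have hre : ∀ D : Matrix n n ℂ, ((Dᴴ * D).trace).re = ∑ j, ∑ k, ‖D k j‖ ^ 2 := by
    intro D
    rw [Matrix.trace]
    rw [Complex.re_sum]
    refine Finset.sum_congr rfl fun j _ => ?_
    rw [Matrix.diag_apply, Matrix.mul_apply, Complex.re_sum]
    refine Finset.sum_congr rfl fun k _ => ?_
    rw [Matrix.conjTranspose_apply, Complex.star_def, ← Complex.normSq_eq_conj_mul_self,
      Complex.sq_norm, Complex.ofReal_re]
  have htrA : (Aᴴ * A).trace = (ρ * (H * H)).trace - ((c : ℂ))^2 := by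
    have e1 : (Aᴴ * A).trace = (Xᴴ * X).trace := by
      rw [hAc, hA_def, Matrix.trace_mul_comm, Matrix.mul_assoc, ← Matrix.mul_assoc U, hUU',
        Matrix.one_mul]
    have e2 : (Xᴴ * X).trace = (ρ * (H' * H')).trace := by
      rw [hXc, hX_def, Matrix.trace_mul_comm, Matrix.mul_assoc, ← Matrix.mul_assoc S S, hSS,
        Matrix.trace_mul_comm, Matrix.mul_assoc]
    have hexp : H' * H' = H * H - (c : ℂ) • H - (c : ℂ) • H + ((c : ℂ) * (c : ℂ)) • 1 := by
      rw [hH'_def]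
      simp only [Matrix.sub_mul, Matrix.mul_sub, Matrix.smul_mul, Matrix.mul_smul, smul_sub,
        smul_smul, Matrix.mul_one, Matrix.one_mul]
      abel
    rw [e1, e2, hexp]
    simp only [Matrix.mul_sub, Matrix.mul_add, Matrix.mul_smul, Matrix.trace_sub,
      Matrix.trace_add, Matrix.trace_smul, Matrix.mul_one, htr, smul_eq_mul, mul_one]
    rw [← ht_def, ht]; ring
  have htrB : (Bᴴ * B).trace = 1 := by
    have e1 : (Bᴴ * B).trace = (S * S).trace := by
      rw [hBc, hB_def, Matrix.trace_mul_comm, Matrix.mul_assoc, ← Matrix.mul_assoc U, hUU',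
        Matrix.one_mul]
    rw [e1, hSS, htr]
  have halphasum : ∑ j, alpha j = ((ρ * (H * H)).trace).re - c ^ 2 := by
    rw [halpha_def, ← hre A, htrA]
    simp [Complex.sub_re, ← Complex.ofReal_pow, pow_two]
  have hbetasum : ∑ j, beta j = 1 := by
    rw [hbeta_def, ← hre B, htrB]
    simp
  -- trace norm equals sum of |eigenvalues|
  set D : Matrix n n ℂ := Matrix.diagonal (fun j => ((|lam j| : ℝ) : ℂ)) with hD_def
  have hDpsd : D.PosSemidef := by
    rw [hD_def]
    exact Matrix.posSemidef_diagonal_iff.mpr fun j => Complex.zero_le_real.mpr (abs_nonneg _)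
  set R : Matrix n n ℂ := U * D * Uᴴ with hR_def
  have hRpsd : R.PosSemidef := hDpsd.mul_mul_conjTranspose_same U
  have hUH : Uᴴ = star U := (Matrix.star_eq_conjTranspose U).symm
  have hkey : ∀ D₁ D₂ : Matrix n n ℂ,
      (U * D₁ * star U) * (U * D₂ * star U) = U * (D₁ * D₂) * star U := by
    intro D₁ D₂
    have h : ∀ x : Matrix n n ℂ, star U * (U * x) = x := fun x => by
      rw [← Matrix.mul_assoc, hUU, Matrix.one_mul]
    simp only [Matrix.mul_assoc]
    rw [h]
  have hMspec : Complex.I • C =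
      U * Matrix.diagonal (Complex.ofReal ∘ lam) * star U := by
    have h := hM.spectral_theorem
    rw [Unitary.conjStarAlgAut_apply] at h; exact h
  have hCC : Cᴴ * C = (Complex.I • C) * (Complex.I • C) := by
    rw [hCt]
    rw [Matrix.smul_mul, Matrix.mul_smul, smul_smul, Complex.I_mul_I, Matrix.neg_mul, neg_smul,
      one_smul]
  have hDD : D * D = Matrix.diagonal (Complex.ofReal ∘ lam) * Matrix.diagonal (Complex.ofReal ∘ lam) := by
    rw [hD_def, Matrix.diagonal_mul_diagonal, Matrix.diagonal_mul_diagonal]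
    have : (fun i => ((|lam i| : ℝ) : ℂ) * ((|lam i| : ℝ) : ℂ))
        = fun i => (Complex.ofReal ∘ lam) i * (Complex.ofReal ∘ lam) i := by
      funext i
      rw [← Complex.ofReal_mul, abs_mul_abs_self, Function.comp_apply, ← Complex.ofReal_mul]
    rw [this]
  have hRsq : R ^ 2 = Cᴴ * C := by
    rw [pow_two, hR_def, hUH, hkey, hDD, hCC, hMspec, hkey]
  open scoped MatrixOrder in
  have hsqrt : cfc Real.sqrt (Cᴴ * C) = R := by
    rw [← cfcₙ_eq_cfc (hf := Real.continuous_sqrt.continuousOn) (hf0 := Real.sqrt_zero),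
      ← CFC.sqrt_eq_real_sqrt _ (Matrix.posSemidef_conjTranspose_mul_self C).nonneg, ← hRsq,
      CFC.sqrt_sq R hRpsd.nonneg]
  have htraceR : R.trace = ∑ j, ((|lam j| : ℝ) : ℂ) := by
    rw [hR_def, hUH, Matrix.trace_mul_cycle, hUU, Matrix.one_mul, hD_def,
      Matrix.trace_diagonal]
  have htn : traceNorm C = ∑ j, |lam j| := by
    rw [show traceNorm C = ((cfc Real.sqrt (Cᴴ * C)).trace).re from by
        rw [(Matrix.posSemidef_conjTranspose_mul_self C).1.cfc_eq]; rfl, hsqrt, htraceR, ← Complex.ofReal_sum, Complex.ofReal_re]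
  -- final assembly
  rw [hC_def] at htn
  rw [htn]
  have h1 : Real.sqrt (∑ j, beta j) = 1 := by rw [hbetasum, Real.sqrt_one]
  have h2 : (((ρ * (H * H)).trace).re - c ^ 2) = ∑ j, alpha j := halphasum.symm
  calc ∑ j, |lam j| ≤ 2 * (Real.sqrt (∑ j, alpha j) * Real.sqrt (∑ j, beta j)) := hsum
    _ = 2 * Real.sqrt (((ρ * (H * H)).trace).re - c ^ 2) := by
        rw [h1, h2, mul_one]
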